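/- Let t > 0 and set s = (t,t,t). Then for every a = (a₁,a₂,a₃) ∈ ℝ³ with a_r < a_r⁰(s) = -t/2 for all r, the determinant of M₆(s,a) is negative; in particular, there is no a ∈ ℝ³ with a_r < a_r⁰(s) for all r such that M₆(s,a) is positive definite. (Hence the normal homogeneous metric on W⁶ does not have strongly positive curvature at the level of invariant modified curvature operators.) -/

import Mathlib

open Matrix

/-- `S(s) = 2(s₁s₂+s₁s₃+s₂s₃) - (s₁²+s₂²+s₃²)`. -/
noncomputable def Spoly (s : Fin 3 → ℝ) : ℝ :=
  2 * (s 0 * s 1 + s 0 * s 2 + s 1 * s 2) - (s 0 ^ 2 + s 1 ^ 2 + s 2 ^ 2)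

/-- `p_r(s) = (s_{r+1}-s_{r+2})² + 2 s_r (s_{r+1}+s_{r+2}) - 3 s_r²`, indices mod 3. -/
noncomputable def ppoly (s : Fin 3 → ℝ) (r : Fin 3) : ℝ :=
  (s (r + 1) - s (r + 2)) ^ 2 + 2 * s r * (s (r + 1) + s (r + 2)) - 3 * s r ^ 2

/-- `a_r⁰(s) = ((s_{r+1}-s_{r+2})² - s_r²)/(2 s_r)`, indices mod 3. -/
noncomputable def a0 (s : Fin 3 → ℝ) (r : Fin 3) : ℝ :=
  ((s (r + 1) - s (r + 2)) ^ 2 - s r ^ 2) / (2 * s r)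

/-- First block of the modified curvature operator of `(W⁶, g_s)`. -/
noncomputable def M6 (s a : Fin 3 → ℝ) : Matrix (Fin 3) (Fin 3) ℝ :=
  !![4 * s 0,                         -Spoly s / (2 * s 2) + a 2,  -Spoly s / (2 * s 1) + a 1;
     -Spoly s / (2 * s 2) + a 2,      4 * s 1,                     -Spoly s / (2 * s 0) + a 0;
     -Spoly s / (2 * s 1) + a 1,      -Spoly s / (2 * s 0) + a 0,  4 * s 2]

lemma W6_det_aux (t c0 c1 c2 : ℝ) (ht : 0 < t) (h0 : c0 < -2 * t)
    (h1 : c1 < -2 * t) (h2 : c2 < -2 * t) :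
    64 * t ^ 3 + 2 * c0 * c1 * c2 - 4 * t * (c0 ^ 2 + c1 ^ 2 + c2 ^ 2) < 0 := by
  set x : ℝ := -c0 with hx0
  set y : ℝ := -c1 with hy0
  set z : ℝ := -c2 with hz0
  have hx : 2 * t < x := by rw [hx0]; linarith
  have hy : 2 * t < y := by rw [hy0]; linarith
  have hz : 2 * t < z := by rw [hz0]; linarith
  have h2t : (0:ℝ) < 2 * t := by linarith
  have hxp : 0 < x := lt_trans h2t hx
  have hyp : 0 < y := lt_trans h2t hy
  have hzp : 0 < z := lt_trans h2t hz
  have hxy : 4 * t ^ 2 < x * y := by nlinarith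
  have hxyz : 8 * t ^ 3 < x * y * z := by
    nlinarith [mul_pos hxp hyp, mul_pos (mul_pos hxp hyp) hzp, mul_pos h2t (mul_pos hyp hzp)]
  have hX : 16 * t ^ 3 < 4 * t * x ^ 2 := by
    nlinarith [mul_pos (mul_pos ht (show (0:ℝ) < x - 2*t by linarith)) (show (0:ℝ) < x + 2*t by linarith)]
  have hY : 16 * t ^ 3 < 4 * t * y ^ 2 := by
    nlinarith [mul_pos (mul_pos ht (show (0:ℝ) < y - 2*t by linarith)) (show (0:ℝ) < y + 2*t by linarith)]
  have hZ : 16 * t ^ 3 < 4 * t * z ^ 2 := by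
    nlinarith [mul_pos (mul_pos ht (show (0:ℝ) < z - 2*t by linarith)) (show (0:ℝ) < z + 2*t by linarith)]
  have hc0e : c0 = -x := by rw [hx0]; ring
  have hc1e : c1 = -y := by rw [hy0]; ring
  have hc2e : c2 = -z := by rw [hz0]; ring
  rw [hc0e, hc1e, hc2e]
  nlinarith [hxyz, hX, hY, hZ]

/-- For the normal homogeneous metric `s = (t,t,t)` on `W⁶` (with `a_r⁰(s) = -t/2`),
every `a` with `a_r < -t/2` for all `r` gives `det M₆(s,a) < 0`; in particular no such
`a` makes `M₆(s,a)` positive definite. -/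
theorem normal_metric_W6_not_stronglyPos (t : ℝ) (ht : 0 < t) :
    (∀ r : Fin 3, a0 (fun _ => t) r = -t / 2) ∧
    (∀ a : Fin 3 → ℝ, (∀ r, a r < -t / 2) → (M6 (fun _ => t) a).det < 0) ∧
    ¬ ∃ a : Fin 3 → ℝ, (∀ r, a r < a0 (fun _ => t) r) ∧ (M6 (fun _ => t) a).PosDef := by
  have ht' : t ≠ 0 := ne_of_gt ht
  have h1 : ∀ r : Fin 3, a0 (fun _ => t) r = -t / 2 := by
    intro r
    simp only [a0]
    field_simp
    ring
  have h2 : ∀ a : Fin 3 → ℝ, (∀ r, a r < -t / 2) → (M6 (fun _ => t) a).det < 0 := by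
    intro a ha
    have hS : Spoly (fun _ => t) = 3 * t ^ 2 := by simp [Spoly]; ring
    have h0 := ha 0; have h1 := ha 1; have h2' := ha 2
    have hd : (M6 (fun _ => t) a).det =
        64 * t ^ 3 + 2 * (a 0 - 3 * t / 2) * (a 1 - 3 * t / 2) * (a 2 - 3 * t / 2)
          - 4 * t * ((a 0 - 3 * t / 2) ^ 2 + (a 1 - 3 * t / 2) ^ 2 + (a 2 - 3 * t / 2) ^ 2) := by
      simp only [M6, Matrix.det_fin_three, hS, Matrix.cons_val', Matrix.cons_val_zero,
        Matrix.cons_val_one, Matrix.head_cons, Matrix.empty_val', Matrix.cons_val_fin_one,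
        Matrix.head_fin_const, Matrix.of_apply, Matrix.cons_val_two, Matrix.tail_cons]
      field_simp
      ring
    rw [hd]
    exact W6_det_aux t _ _ _ ht (by linarith) (by linarith) (by linarith)
  refine ⟨h1, h2, ?_⟩
  rintro ⟨a, ha, hpd⟩
  have := h2 a (fun r => by rw [← h1 r]; exact ha r)
  exact absurd hpd.det_pos (by linarith)
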